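/- arXiv:2502.02990 — 2 statements merged into one kernel-verified Lean document; each statement's English description precedes it below -/
import Mathlib

section
/- Let n ≥ 1 and let b_1,…,b_{2n} ∈ {0,1}. Let π be a uniformly random permutation of {1,…,2n} and set c_i = b_{π(i)}. For 0 ≤ i ≤ 2n let Y_i = |{j : i < j ≤ 2n and c_j = 0}|, and for 0 ≤ i ≤ n let X_i = Y_i/(2n−i) − Y_0/(2n). Then for every t ≥ 0, Pr[max_{1≤i≤n} |X_i| ≥ t] ≤ 2·exp(−t²·n/2). -/
open Finset Real

namespace Stmt0Aux
open scoped Classical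

lemma chord (μ x : ℝ) (h0 : -1 ≤ x) (h1 : x ≤ 1) :
    Real.exp (μ * x) ≤ Real.cosh μ + x * Real.sinh μ := by
  have hc := convexOn_exp.2 (Set.mem_univ (-μ)) (Set.mem_univ μ)
    (show (0:ℝ) ≤ (1 - x)/2 by linarith) (show (0:ℝ) ≤ (1 + x)/2 by linarith)
    (show (1 - x)/2 + (1 + x)/2 = 1 by ring)
  simp only [smul_eq_mul] at hc
  have h2 : (1 - x)/2 * (-μ) + (1 + x)/2 * μ = μ * x := by ring
  rw [h2] at hc
  rw [Real.cosh_eq, Real.sinh_eq]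
  nlinarith [hc]

lemma two_point (μ q : ℝ) (h0 : 0 ≤ q) (h1 : q ≤ 1) :
    q * Real.exp (μ * (q - 1)) + (1 - q) * Real.exp (μ * q) ≤ Real.exp (μ ^ 2 / 2) := by
  have c1 := chord μ (q - 1) (by linarith) (by linarith)
  have c2 := chord μ q (by linarith) (by linarith)
  have hch := Real.cosh_le_exp_half_sq μ
  nlinarith [c1, c2, hch, Real.exp_pos (μ * (q-1)), Real.exp_pos (μ * q)]


noncomputable section

def Om (n Z : ℕ) : Finset (Finset (Fin (2*n))) := powersetCard Z univ

def yv (n : ℕ) (S : Finset (Fin (2*n))) (i : ℕ) : ℕ :=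
  (S.filter fun j : Fin (2*n) => i ≤ (j:ℕ)).card

def Lo (n : ℕ) (S : Finset (Fin (2*n))) (i : ℕ) : Finset (Fin (2*n)) :=
  S.filter fun j : Fin (2*n) => (j:ℕ) < i

def Xv (n Z : ℕ) (S : Finset (Fin (2*n))) (i : ℕ) : ℝ :=
  (yv n S i : ℝ)/(2*(n:ℝ) - i) - (Z:ℝ)/(2*(n:ℝ))

lemma mem_Om {n Z : ℕ} {S : Finset (Fin (2*n))} : S ∈ Om n Z ↔ S.card = Z := by
  simp [Om, mem_powersetCard, subset_univ]

lemma card_H (n i : ℕ) :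
    ((univ : Finset (Fin (2*n))).filter fun j : Fin (2*n) => i ≤ (j:ℕ)).card = 2*n - i := by
  have him : ((univ : Finset (Fin (2*n))).filter fun j : Fin (2*n) => i ≤ (j:ℕ)).image Fin.val
      = Ico i (2*n) := by
    ext x
    simp only [mem_image, mem_filter, mem_univ, true_and, mem_Ico]
    constructor
    · rintro ⟨j, hj, rfl⟩; exact ⟨hj, j.2⟩
    · rintro ⟨h1, h2⟩; exact ⟨⟨x, h2⟩, h1, rfl⟩
  rw [← Nat.card_Ico i (2*n), ← him, card_image_of_injective _ Fin.val_injective]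

lemma yv_le (n : ℕ) (S : Finset (Fin (2*n))) (i : ℕ) : yv n S i ≤ 2*n - i := by
  rw [← card_H n i]
  exact card_le_card (filter_subset_filter _ (subset_univ S))

lemma lo_card_add_yv (n : ℕ) (S : Finset (Fin (2*n))) (i : ℕ) :
    (Lo n S i).card + yv n S i = S.card := by
  have h := card_filter_add_card_filter_not (s := S) (p := fun j : Fin (2*n) => (j:ℕ) < i)
  have h2 : S.filter (fun a : Fin (2*n) => ¬ (a:ℕ) < i) = S.filter (fun j : Fin (2*n) => i ≤ (j:ℕ)) :=
    filter_congr fun x _ => by omega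
  rw [Lo, yv, ← h2]
  exact h

lemma yv_zero (n : ℕ) (S : Finset (Fin (2*n))) : yv n S 0 = S.card := by
  simp [yv]

lemma lo_lo (n : ℕ) (S : Finset (Fin (2*n))) {k i : ℕ} (h : k ≤ i) :
    Lo n (Lo n S i) k = Lo n S k := by
  rw [Lo, Lo, Lo, filter_filter]
  exact filter_congr fun x _ => by omega

lemma yv_eq_of_lo_eq {n : ℕ} {S S' : Finset (Fin (2*n))} {i : ℕ}
    (hc : S.card = S'.card) (h : Lo n S i = Lo n S' i) {k : ℕ} (hk : k ≤ i) :
    yv n S k = yv n S' k := by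
  have h1 := lo_card_add_yv n S k
  have h2 := lo_card_add_yv n S' k
  rw [← lo_lo n S hk, h, lo_lo n S' hk] at h1
  omega

lemma yv_succ_mem {n : ℕ} {S : Finset (Fin (2*n))} {i : ℕ} (hi : i < 2*n)
    (h : (⟨i, hi⟩ : Fin (2*n)) ∈ S) : yv n S (i+1) + 1 = yv n S i := by
  rw [yv, yv, show S.filter (fun j : Fin (2*n) => i ≤ (j:ℕ))
      = insert (⟨i, hi⟩ : Fin (2*n)) (S.filter fun j : Fin (2*n) => i+1 ≤ (j:ℕ)) from ?_,
    card_insert_of_notMem (by simp)]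
  ext j
  simp only [mem_filter, mem_insert]
  constructor
  · rintro ⟨hj, hij⟩
    rcases eq_or_lt_of_le hij with he | hl
    · left; exact Fin.ext he.symm
    · right; exact ⟨hj, hl⟩
  · rintro (rfl | ⟨hj, hij⟩)
    · exact ⟨h, le_refl _⟩
    · exact ⟨hj, by omega⟩

lemma yv_succ_not {n : ℕ} {S : Finset (Fin (2*n))} {i : ℕ} (hi : i < 2*n)
    (h : (⟨i, hi⟩ : Fin (2*n)) ∉ S) : yv n S (i+1) = yv n S i := by
  rw [yv, yv]
  congr 1
  apply filter_congr
  intro x hx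
  constructor <;> intro h2
  · omega
  · rcases eq_or_lt_of_le h2 with he | hl
    · exfalso; apply h
      have : x = ⟨i, hi⟩ := Fin.ext he.symm
      exact this ▸ hx
    · omega


lemma mem_image_swap {n : ℕ} (a b : Fin (2*n)) (S : Finset (Fin (2*n))) (x : Fin (2*n)) :
    x ∈ S.image (Equiv.swap a b) ↔ Equiv.swap a b x ∈ S := by
  constructor
  · rintro hx
    obtain ⟨y, hy, rfl⟩ := mem_image.1 hx
    rwa [Equiv.swap_apply_self]
  · intro hx
    exact mem_image.2 ⟨_, hx, Equiv.swap_apply_self _ _ _⟩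

lemma swap_bij {n Z i : ℕ} (hi : i < 2*n) (T : Finset (Fin (2*n))) (k : Fin (2*n))
    (hk : i ≤ (k:ℕ)) :
    (((Om n Z).filter fun S => Lo n S i = T).filter fun S => k ∈ S).card
      = (((Om n Z).filter fun S => Lo n S i = T).filter
          fun S => (⟨i, hi⟩ : Fin (2*n)) ∈ S).card := by
  set a : Fin (2*n) := ⟨i, hi⟩ with ha
  have key : ∀ S : Finset (Fin (2*n)), S ∈ Om n Z → Lo n S i = T →
      (S.image (Equiv.swap a k) ∈ Om n Z ∧ Lo n (S.image (Equiv.swap a k)) i = T) := by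
    intro S hS hLo
    constructor
    · rw [mem_Om] at hS ⊢
      rw [card_image_of_injective _ (Equiv.swap a k).injective]; exact hS
    · rw [← hLo, Lo, Lo]
      ext x
      simp only [mem_filter, mem_image_swap]
      constructor
      · rintro ⟨hx1, hx2⟩
        rw [Equiv.swap_apply_of_ne_of_ne] at hx1
        · exact ⟨hx1, hx2⟩
        · intro hxa; rw [hxa] at hx2; simp [ha] at hx2
        · intro hxk; rw [hxk] at hx2; omega
      · rintro ⟨hx1, hx2⟩
        rw [Equiv.swap_apply_of_ne_of_ne]
        · exact ⟨hx1, hx2⟩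
        · intro hxa; rw [hxa] at hx2; simp [ha] at hx2
        · intro hxk; rw [hxk] at hx2; omega
  have hinv : ∀ S : Finset (Fin (2*n)), (S.image (Equiv.swap a k)).image (Equiv.swap a k) = S := by
    intro S
    rw [Finset.image_image]
    have : (Equiv.swap a k) ∘ (Equiv.swap a k) = id := by
      funext x; simp [Equiv.swap_apply_self]
    rw [this, image_id]
  refine card_bij' (fun S _ => S.image (Equiv.swap a k)) (fun S _ => S.image (Equiv.swap a k))
    ?_ ?_ (fun S _ => hinv S) (fun S _ => hinv S)
  · intro S hS
    simp only [mem_filter] at hS ⊢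
    obtain ⟨⟨h1, h2⟩, h3⟩ := hS
    refine ⟨⟨(key S h1 h2).1, (key S h1 h2).2⟩, ?_⟩
    rw [mem_image_swap, Equiv.swap_apply_left]; exact h3
  · intro S hS
    simp only [mem_filter] at hS ⊢
    obtain ⟨⟨h1, h2⟩, h3⟩ := hS
    refine ⟨⟨(key S h1 h2).1, (key S h1 h2).2⟩, ?_⟩
    rw [mem_image_swap, Equiv.swap_apply_right]; exact h3

lemma count_mem {n Z i : ℕ} (hi : i < 2*n) (T : Finset (Fin (2*n))) (r : ℕ)
    (hr : ∀ S ∈ (Om n Z).filter (fun S => Lo n S i = T), yv n S i = r) :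
    (2*n - i) * (((Om n Z).filter fun S => Lo n S i = T).filter
        fun S => (⟨i, hi⟩ : Fin (2*n)) ∈ S).card
      = r * ((Om n Z).filter fun S => Lo n S i = T).card := by
  set A := (Om n Z).filter fun S => Lo n S i = T with hA
  set H := (univ : Finset (Fin (2*n))).filter fun j : Fin (2*n) => i ≤ (j:ℕ) with hH
  have hsum : ∑ S ∈ A, (yv n S i : ℕ) = ∑ S ∈ A, ∑ k ∈ H, (if k ∈ S then 1 else 0) := by
    apply sum_congr rfl
    intro S _
    rw [yv, show S.filter (fun j : Fin (2*n) => i ≤ (j:ℕ)) = H.filter (fun k => k ∈ S) from ?_,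
      card_filter]
    ext x
    simp only [mem_filter, mem_univ, true_and, hH]
    tauto
  have hswap : ∑ S ∈ A, ∑ k ∈ H, (if k ∈ S then 1 else 0)
      = ∑ k ∈ H, (A.filter fun S => k ∈ S).card := by
    rw [Finset.sum_comm]
    exact sum_congr rfl fun k _ => (card_filter _ _).symm
  have hconst : ∀ k ∈ H, (A.filter fun S => k ∈ S).card
      = (A.filter fun S => (⟨i, hi⟩ : Fin (2*n)) ∈ S).card := by
    intro k hk
    simp only [hH, mem_filter, mem_univ, true_and] at hk
    exact swap_bij hi T k hk
  have : ∑ S ∈ A, yv n S i = r * A.card := by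
    rw [Finset.sum_congr rfl hr, sum_const, smul_eq_mul, mul_comm]
  rw [← this, hsum, hswap, Finset.sum_congr rfl hconst, sum_const, smul_eq_mul]
  congr 1
  rw [hH, card_H]

lemma count_not {n Z i : ℕ} (hi : i < 2*n) (T : Finset (Fin (2*n))) (r : ℕ) (hrm : r ≤ 2*n - i)
    (hr : ∀ S ∈ (Om n Z).filter (fun S => Lo n S i = T), yv n S i = r) :
    (2*n - i) * (((Om n Z).filter fun S => Lo n S i = T).filter
        fun S => (⟨i, hi⟩ : Fin (2*n)) ∉ S).card
      = (2*n - i - r) * ((Om n Z).filter fun S => Lo n S i = T).card := by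
  set A := (Om n Z).filter fun S => Lo n S i = T with hA
  have h1 := count_mem hi T r hr
  have h2 := card_filter_add_card_filter_not (s := A)
    (p := fun S => (⟨i, hi⟩ : Fin (2*n)) ∈ S)
  have h3 : (A.filter fun S => (⟨i, hi⟩ : Fin (2*n)) ∈ S).card ≤ A.card :=
    card_le_card (filter_subset _ _)
  rw [← hA] at h1
  -- (2n-i) * |A1| = (2n-i)*|A| - (2n-i)*|A0| = (2n-i)|A| - r|A| = (2n-i-r)|A|
  have : (2*n - i) * (A.filter fun S => ¬ (⟨i, hi⟩ : Fin (2*n)) ∈ S).card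
      = (2*n - i) * A.card - r * A.card := by
    have hx : (A.filter fun S => ¬ (⟨i, hi⟩ : Fin (2*n)) ∈ S).card
        = A.card - (A.filter fun S => (⟨i, hi⟩ : Fin (2*n)) ∈ S).card := by omega
    rw [hx, Nat.mul_sub, h1]
  rw [this, ← Nat.sub_mul]


def phi (n Z : ℕ) (lam a : ℝ) (i : ℕ) (S : Finset (Fin (2*n))) : ℝ :=
  if ∃ k ∈ Icc 1 i, a ≤ Real.exp (lam * Xv n Z S k) then a
  else Real.exp (lam * Xv n Z S i)

lemma phi_nonneg {n Z : ℕ} {lam a : ℝ} (ha : 0 < a) (i : ℕ) (S : Finset (Fin (2*n))) :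
    0 ≤ phi n Z lam a i S := by
  rw [phi]; split_ifs
  · exact le_of_lt ha
  · exact (Real.exp_pos _).le

lemma step {n Z : ℕ} (hn : 1 ≤ n) (lam a : ℝ) (ha : 0 < a) {i : ℕ} (hi : i < n)
    (T : Finset (Fin (2*n))) :
    ∑ S ∈ (Om n Z).filter (fun S => Lo n S i = T), phi n Z lam a (i+1) S
      ≤ Real.exp (lam^2 * ((2*(n:ℝ) - 1 - i)⁻¹)^2 / 2) *
        ∑ S ∈ (Om n Z).filter (fun S => Lo n S i = T), phi n Z lam a i S := by
  have hi2 : i < 2*n := by omega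
  set A := (Om n Z).filter (fun S => Lo n S i = T) with hA
  rcases A.eq_empty_or_nonempty with hAe | ⟨S₀, hS₀⟩
  · simp [hAe]
  have hexp1 : (1:ℝ) ≤ Real.exp (lam^2 * ((2*(n:ℝ) - 1 - i)⁻¹)^2 / 2) :=
    Real.one_le_exp (by positivity)
  obtain ⟨hS₀Om, hS₀Lo⟩ := mem_filter.1 hS₀
  set r := yv n S₀ i with hr
  have hrall : ∀ S ∈ A, yv n S i = r := by
    intro S hS
    obtain ⟨hSOm, hSLo⟩ := mem_filter.1 hS
    exact yv_eq_of_lo_eq ((mem_Om.1 hSOm).trans (mem_Om.1 hS₀Om).symm)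
      (hSLo.trans hS₀Lo.symm) le_rfl
  have hrm : r ≤ 2*n - i := yv_le n S₀ i
  have hXconst : ∀ S ∈ A, ∀ k ≤ i, Xv n Z S k = Xv n Z S₀ k := by
    intro S hS k hk
    obtain ⟨hSOm, hSLo⟩ := mem_filter.1 hS
    have hyk := yv_eq_of_lo_eq ((mem_Om.1 hSOm).trans (mem_Om.1 hS₀Om).symm)
      (hSLo.trans hS₀Lo.symm) hk
    rw [Xv, Xv, hyk]
  by_cases hE : ∃ k ∈ Icc 1 i, a ≤ Real.exp (lam * Xv n Z S₀ k)
  · -- already hit: φ is constantly a on the class at levels i and i+1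
    have h1 : ∀ S ∈ A, phi n Z lam a i S = a := by
      intro S hS
      rw [phi, if_pos]
      obtain ⟨k, hk, hak⟩ := hE
      exact ⟨k, hk, by rwa [hXconst S hS k (mem_Icc.1 hk).2]⟩
    have h2 : ∀ S ∈ A, phi n Z lam a (i+1) S = a := by
      intro S hS
      rw [phi, if_pos]
      obtain ⟨k, hk, hak⟩ := hE
      have hki : k ≤ i := (mem_Icc.1 hk).2
      exact ⟨k, mem_Icc.2 ⟨(mem_Icc.1 hk).1, by omega⟩, by rwa [hXconst S hS k hki]⟩
    rw [sum_congr rfl h1, sum_congr rfl h2, sum_const, nsmul_eq_mul]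
    exact le_mul_of_one_le_left (by positivity) hexp1
  · -- not yet hit
    have hphin : ∀ S ∈ A, phi n Z lam a i S = Real.exp (lam * Xv n Z S₀ i) := by
      intro S hS
      rw [phi, if_neg, hXconst S hS i le_rfl]
      rintro ⟨k, hk, hak⟩
      exact hE ⟨k, hk, by rwa [← hXconst S hS k (mem_Icc.1 hk).2]⟩
    have hphis : ∀ S ∈ A, phi n Z lam a (i+1) S ≤ Real.exp (lam * Xv n Z S (i+1)) := by
      intro S hS
      rw [phi]
      split_ifs with h
      · obtain ⟨k, hk, hak⟩ := h
        obtain ⟨hk1, hk2⟩ := mem_Icc.1 hk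
        rcases Nat.lt_or_ge k (i+1) with hlt | hge
        · exact absurd ⟨k, mem_Icc.2 ⟨hk1, by omega⟩,
            by rwa [← hXconst S hS k (by omega)]⟩ hE
        · have : k = i + 1 := by omega
          rwa [this] at hak
      · exact le_refl _
    have hle1 : ∑ S ∈ A, phi n Z lam a (i+1) S ≤ ∑ S ∈ A, Real.exp (lam * Xv n Z S (i+1)) :=
      sum_le_sum hphis
    -- split the class by membership of the i-th element
    set af : Fin (2*n) := ⟨i, hi2⟩ with haf
    have hsplit := sum_filter_add_sum_filter_not A (fun S => af ∈ S)
      (fun S => Real.exp (lam * Xv n Z S (i+1)))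
    -- real abbreviations
    set mR : ℝ := 2*(n:ℝ) - i with hmR
    have hmR1 : (1:ℝ) ≤ mR - 1 := by
      rw [hmR]
      have : (i:ℝ) ≤ (n:ℝ) - 1 := by
        have : (i:ℝ) + 1 ≤ (n:ℝ) := by exact_mod_cast hi
        linarith
      have hn1 : (1:ℝ) ≤ (n:ℝ) := by exact_mod_cast hn
      linarith
    have hmRpos : (0:ℝ) < mR := by linarith
    have hmR1pos : (0:ℝ) < mR - 1 := by linarith
    set p : ℝ := (Z:ℝ)/(2*(n:ℝ)) with hp
    set q : ℝ := (r:ℝ)/mR with hq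
    have hq0 : 0 ≤ q := by positivity
    have hrmR : (r:ℝ) ≤ mR := by
      have := hrm
      have h2n : i ≤ 2*n := by omega
      have : (r:ℝ) ≤ ((2*n - i : ℕ):ℝ) := by exact_mod_cast hrm
      rwa [Nat.cast_sub h2n, Nat.cast_mul, Nat.cast_ofNat] at this
    have hq1 : q ≤ 1 := by
      rw [hq, div_le_one hmRpos]; exact hrmR
    set μ : ℝ := lam / (mR - 1) with hmu
    set xb : ℝ := Real.exp (lam * (q - p)) with hxb
    -- value of Xv at level i on the class
    have hXi : ∀ S ∈ A, Xv n Z S i = q - p := by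
      intro S hS
      rw [Xv, hrall S hS, hq, hp, hmR]
    -- value of Xv at level i+1 on each part
    have hXmem : ∀ S ∈ A, af ∈ S → Real.exp (lam * Xv n Z S (i+1)) = xb * Real.exp (μ * (q - 1)) := by
      intro S hS hmem
      have hy := yv_succ_mem hi2 hmem
      rw [hrall S hS] at hy
      have hr1 : 1 ≤ r := by omega
      have hycast : ((yv n S (i+1) : ℕ):ℝ) = (r:ℝ) - 1 := by
        have : ((yv n S (i+1) : ℕ):ℝ) + 1 = (r:ℝ) := by exact_mod_cast hy
        linarith
      rw [Xv, hycast, hxb, ← Real.exp_add]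
      congr 1
      have hden : 2*(n:ℝ) - ((i+1 : ℕ):ℝ) = mR - 1 := by
        push_cast; rw [hmR]; ring
      have hnne : (2*(n:ℝ)) ≠ 0 := by
        have : (1:ℝ) ≤ (n:ℝ) := by exact_mod_cast hn
        linarith
      rw [hden, hmu, hq, hp]
      field_simp
      ring
    have hXnot : ∀ S ∈ A, af ∉ S → Real.exp (lam * Xv n Z S (i+1)) = xb * Real.exp (μ * q) := by
      intro S hS hmem
      have hy := yv_succ_not hi2 hmem
      rw [hrall S hS] at hy
      rw [Xv, hy, hxb, ← Real.exp_add]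
      congr 1
      have hden : 2*(n:ℝ) - ((i+1 : ℕ):ℝ) = mR - 1 := by
        push_cast; rw [hmR]; ring
      have hnne : (2*(n:ℝ)) ≠ 0 := by
        have : (1:ℝ) ≤ (n:ℝ) := by exact_mod_cast hn
        linarith
      rw [hden, hmu, hq, hp]
      field_simp
      ring
    -- cardinalities
    have hc0' := count_mem (Z := Z) hi2 T r hrall
    have hc1' := count_not (Z := Z) hi2 T r hrm hrall
    rw [← hA] at hc0' hc1'
    have hcast2n : ((2*n - i : ℕ):ℝ) = mR := by
      have h2n : i ≤ 2*n := by omega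
      rw [Nat.cast_sub h2n, hmR]; push_cast; ring
    have hcastd : ((2*n - i - r : ℕ):ℝ) = mR - (r:ℝ) := by
      rw [Nat.cast_sub hrm, hcast2n]
    have hmRne : mR ≠ 0 := ne_of_gt hmRpos
    have hc0 : mR * ((A.filter fun S => af ∈ S).card : ℝ) = (r:ℝ) * (A.card : ℝ) := by
      have h := congrArg (Nat.cast : ℕ → ℝ) hc0'
      rw [Nat.cast_mul, Nat.cast_mul, hcast2n] at h
      exact h
    have hc1 : mR * ((A.filter fun S => af ∉ S).card : ℝ) = (mR - (r:ℝ)) * (A.card : ℝ) := by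
      have h := congrArg (Nat.cast : ℕ → ℝ) hc1'
      rw [Nat.cast_mul, Nat.cast_mul, hcast2n, hcastd] at h
      exact h
    set c : ℝ := (A.card : ℝ) with hc
    have hcpos : 0 ≤ c := by positivity
    have hmq : mR * q = (r:ℝ) := by
      rw [hq, mul_comm, div_mul_cancel₀ _ hmRne]
    have hc0e : ((A.filter fun S => af ∈ S).card : ℝ) = q * c := by
      apply mul_left_cancel₀ hmRne
      rw [hc0]
      linear_combination (-c) * hmq
    have hc1e : ((A.filter fun S => af ∉ S).card : ℝ) = (1 - q) * c := by
      apply mul_left_cancel₀ hmRne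
      rw [hc1]
      linear_combination c * hmq
    -- assemble
    have hsum0 : ∑ S ∈ A.filter (fun S => af ∈ S), Real.exp (lam * Xv n Z S (i+1))
        = q * c * (xb * Real.exp (μ * (q - 1))) := by
      rw [sum_congr rfl (fun S hS => hXmem S (mem_filter.1 hS).1 (mem_filter.1 hS).2),
        sum_const, nsmul_eq_mul, hc0e]
    have hsum1 : ∑ S ∈ A.filter (fun S => ¬ af ∈ S), Real.exp (lam * Xv n Z S (i+1))
        = (1 - q) * c * (xb * Real.exp (μ * q)) := by
      rw [sum_congr rfl (fun S hS => hXnot S (mem_filter.1 hS).1 (mem_filter.1 hS).2),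
        sum_const, nsmul_eq_mul, hc1e]
    have htp := two_point μ q hq0 hq1
    have hxbpos : 0 < xb := Real.exp_pos _
    have hx0 : Real.exp (lam * Xv n Z S₀ i) = xb := by
      rw [hxb, hXi S₀ hS₀]
    have hrhs : ∑ S ∈ A, phi n Z lam a i S = c * xb := by
      rw [sum_congr rfl hphin, sum_const, nsmul_eq_mul, hx0, hc]
    have hKeq : Real.exp (lam^2 * ((2*(n:ℝ) - 1 - i)⁻¹)^2 / 2) = Real.exp (μ^2/2) := by
      rw [hmu]
      congr 1
      have h1 : 2*(n:ℝ) - 1 - i = mR - 1 := by rw [hmR]; ring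
      rw [h1]
      ring
    calc ∑ S ∈ A, phi n Z lam a (i+1) S
        ≤ ∑ S ∈ A, Real.exp (lam * Xv n Z S (i+1)) := hle1
      _ = q * c * (xb * Real.exp (μ * (q - 1))) + (1 - q) * c * (xb * Real.exp (μ * q)) := by
          rw [← hsplit, hsum0, hsum1]
      _ = c * xb * (q * Real.exp (μ * (q - 1)) + (1 - q) * Real.exp (μ * q)) := by ring
      _ ≤ c * xb * Real.exp (μ^2/2) :=
          mul_le_mul_of_nonneg_left htp (mul_nonneg hcpos hxbpos.le)
      _ = Real.exp (lam^2 * ((2*(n:ℝ) - 1 - i)⁻¹)^2 / 2) * (c * xb) := by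
          rw [hKeq]; ring
      _ = Real.exp (lam^2 * ((2*(n:ℝ) - 1 - i)⁻¹)^2 / 2) * ∑ S ∈ A, phi n Z lam a i S := by
          rw [hrhs]


lemma induct {n Z : ℕ} (hn : 1 ≤ n) (lam a : ℝ) (ha : 0 < a) :
    ∀ i, i ≤ n → ∑ S ∈ Om n Z, phi n Z lam a i S
      ≤ Real.exp (lam^2 * (∑ j ∈ range i, ((2*(n:ℝ) - 1 - j)⁻¹)^2) / 2) * ((Om n Z).card : ℝ) := by
  intro i
  induction i with
  | zero =>
    intro _
    have h0 : ∀ S ∈ Om n Z, phi n Z lam a 0 S = 1 := by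
      intro S hS
      rw [phi, if_neg (by simp)]
      have hx : Xv n Z S 0 = 0 := by
        rw [Xv, yv_zero, mem_Om.1 hS]
        norm_num
      rw [hx, mul_zero, Real.exp_zero]
    rw [sum_congr rfl h0, sum_const, nsmul_eq_mul, mul_one]
    simp
  | succ i ih =>
    intro hi1
    have hi : i < n := hi1
    have ihh := ih (by omega)
    have hmaps : ∀ S ∈ Om n Z, Lo n S i ∈ (Om n Z).image (fun S => Lo n S i) :=
      fun S hS => mem_image_of_mem _ hS
    have hfib1 := sum_fiberwise_of_maps_to hmaps (phi n Z lam a (i+1))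
    have hfib0 := sum_fiberwise_of_maps_to hmaps (phi n Z lam a i)
    set K : ℝ := Real.exp (lam^2 * ((2*(n:ℝ) - 1 - i)⁻¹)^2 / 2) with hK
    have hKpos : 0 < K := Real.exp_pos _
    calc ∑ S ∈ Om n Z, phi n Z lam a (i+1) S
        = ∑ T ∈ (Om n Z).image (fun S => Lo n S i),
            ∑ S ∈ (Om n Z).filter (fun S => Lo n S i = T), phi n Z lam a (i+1) S := hfib1.symm
      _ ≤ ∑ T ∈ (Om n Z).image (fun S => Lo n S i),
            K * ∑ S ∈ (Om n Z).filter (fun S => Lo n S i = T), phi n Z lam a i S :=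
          sum_le_sum (fun T _ => step hn lam a ha hi T)
      _ = K * ∑ S ∈ Om n Z, phi n Z lam a i S := by rw [← mul_sum, hfib0]
      _ ≤ K * (Real.exp (lam^2 * (∑ j ∈ range i, ((2*(n:ℝ) - 1 - j)⁻¹)^2) / 2)
            * ((Om n Z).card : ℝ)) := mul_le_mul_of_nonneg_left ihh hKpos.le
      _ = Real.exp (lam^2 * (∑ j ∈ range (i+1), ((2*(n:ℝ) - 1 - j)⁻¹)^2) / 2)
            * ((Om n Z).card : ℝ) := by
          rw [← mul_assoc, hK, ← Real.exp_add, sum_range_succ]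
          congr 2
          ring

lemma sum_inv_sq {n : ℕ} (hn : 1 ≤ n) :
    ∑ j ∈ range n, ((2*(n:ℝ) - 1 - j)⁻¹)^2 ≤ (n:ℝ)⁻¹ := by
  by_cases h1 : n = 1
  · subst h1
    norm_num
  have hn2 : 2 ≤ n := by omega
  have hn2R : (2:ℝ) ≤ (n:ℝ) := by exact_mod_cast hn2
  set f : ℕ → ℝ := fun j => (2*(n:ℝ) - 1/2 - j)⁻¹ with hf
  have hterm : ∀ j ∈ range n, ((2*(n:ℝ) - 1 - j)⁻¹)^2 ≤ f (j+1) - f j := by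
    intro j hj
    have hjn : (j:ℝ) ≤ (n:ℝ) - 1 := by
      have : j + 1 ≤ n := mem_range.1 hj
      have : ((j:ℝ)) + 1 ≤ (n:ℝ) := by exact_mod_cast this
      linarith
    set k : ℝ := 2*(n:ℝ) - 1 - j with hk
    have hk1 : 1 ≤ k := by rw [hk]; linarith
    have h1 : (0:ℝ) < k - 1/2 := by linarith
    have h2 : (0:ℝ) < k + 1/2 := by linarith
    have hfj : f (j+1) = (k - 1/2)⁻¹ := by
      rw [hf, hk]; push_cast; congr 1; ring
    have hfj2 : f j = (k + 1/2)⁻¹ := by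
      rw [hf, hk]; congr 1; ring
    rw [hfj, hfj2]
    have key : (k - 1/2)⁻¹ - (k + 1/2)⁻¹ = (k^2 - 1/4)⁻¹ := by
      have e1 : k - 1/2 ≠ 0 := ne_of_gt h1
      have e2 : k + 1/2 ≠ 0 := ne_of_gt h2
      have hd : (k - 1/2) * (k + 1/2) = k^2 - 1/4 := by ring
      rw [inv_eq_one_div, inv_eq_one_div, inv_eq_one_div, div_sub_div _ _ e1 e2, hd]
      congr 1
      ring
    rw [key, inv_pow]
    have h3 : (0:ℝ) < k^2 - 1/4 := by nlinarith
    have h4 : k^2 - 1/4 ≤ k^2 := by linarith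
    exact inv_anti₀ h3 h4
  have htel := Finset.sum_range_sub f n
  calc ∑ j ∈ range n, ((2*(n:ℝ) - 1 - j)⁻¹)^2
      ≤ ∑ j ∈ range n, (f (j+1) - f j) := sum_le_sum hterm
    _ = f n - f 0 := htel
    _ ≤ (n:ℝ)⁻¹ := by
        have h1 : (0:ℝ) < (n:ℝ) - 1/2 := by linarith
        have h2 : (0:ℝ) < 2*(n:ℝ) - 1/2 := by linarith
        have h0 : (0:ℝ) < (n:ℝ) := by linarith
        have hfn : f n = ((n:ℝ) - 1/2)⁻¹ := by
          simp only [hf]; congr 1; push_cast; ring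
        have hf0 : f 0 = (2*(n:ℝ) - 1/2)⁻¹ := by
          simp only [hf]; congr 1; push_cast; ring
        rw [hfn, hf0]
        have e1 : ((n:ℝ) - 1/2) ≠ 0 := ne_of_gt h1
        have e2 : (2*(n:ℝ) - 1/2) ≠ 0 := ne_of_gt h2
        rw [inv_eq_one_div, inv_eq_one_div, inv_eq_one_div, div_sub_div _ _ e1 e2,
          div_le_div_iff₀ (by positivity) h0]
        nlinarith

lemma maximal {n Z : ℕ} (hn : 1 ≤ n) (lam a : ℝ) (ha : 0 < a)
    {F : Finset (Finset (Fin (2*n)))} (hFsub : F ⊆ Om n Z)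
    (hFprop : ∀ S ∈ F, ∃ k ∈ Icc 1 n, a ≤ Real.exp (lam * Xv n Z S k)) :
    a * (F.card : ℝ) ≤ Real.exp (lam^2 * (n:ℝ)⁻¹ / 2) * ((Om n Z).card : ℝ) := by
  have hind := induct (Z := Z) hn lam a ha n le_rfl
  have hW := sum_inv_sq hn
  have hphiF : ∀ S ∈ F, phi n Z lam a n S = a := by
    intro S hS
    rw [phi]
    split_ifs with hc
    · rfl
    · exact absurd (hFprop S hS) hc
  have h1 : a * ((F.card : ℕ) : ℝ) = ∑ S ∈ F, phi n Z lam a n S := by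
    rw [sum_congr rfl hphiF, sum_const, nsmul_eq_mul, mul_comm]
  have h2 : ∑ S ∈ F, phi n Z lam a n S ≤ ∑ S ∈ Om n Z, phi n Z lam a n S :=
    sum_le_sum_of_subset_of_nonneg hFsub (fun S _ _ => phi_nonneg ha n S)
  have h3 : Real.exp (lam^2 * (∑ j ∈ range n, ((2*(n:ℝ) - 1 - j)⁻¹)^2) / 2)
      ≤ Real.exp (lam^2 * (n:ℝ)⁻¹ / 2) := by
    apply Real.exp_le_exp.2
    have hl : (0:ℝ) ≤ lam^2 := sq_nonneg lam
    nlinarith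
  calc a * ((F.card : ℕ) : ℝ) = ∑ S ∈ F, phi n Z lam a n S := h1
    _ ≤ ∑ S ∈ Om n Z, phi n Z lam a n S := h2
    _ ≤ Real.exp (lam^2 * (∑ j ∈ range n, ((2*(n:ℝ) - 1 - j)⁻¹)^2) / 2) * ((Om n Z).card : ℝ) := hind
    _ ≤ Real.exp (lam^2 * (n:ℝ)⁻¹ / 2) * ((Om n Z).card : ℝ) :=
        mul_le_mul_of_nonneg_right h3 (by positivity)


lemma main_subset {n Z : ℕ} (hn : 1 ≤ n) (t : ℝ) (ht : 0 ≤ t)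
    {F : Finset (Finset (Fin (2*n)))} (hFsub : F ⊆ Om n Z)
    (hFprop : ∀ S ∈ F, ∃ k ∈ Icc 1 n, t ≤ |Xv n Z S k|) :
    (F.card : ℝ) ≤ 2 * Real.exp (-(t^2) * (n:ℝ) / 2) * ((Om n Z).card : ℝ) := by
  classical
  set lam : ℝ := (n:ℝ) * t with hlam
  set a : ℝ := Real.exp (lam * t) with ha
  have hapos : 0 < a := Real.exp_pos _
  have hlam0 : 0 ≤ lam := by positivity
  set Fp := F.filter (fun S => ∃ k ∈ Icc 1 n, a ≤ Real.exp (lam * Xv n Z S k)) with hFp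
  set Fm := F.filter (fun S => ∃ k ∈ Icc 1 n, a ≤ Real.exp ((-lam) * Xv n Z S k)) with hFm
  have hFunion : F ⊆ Fp ∪ Fm := by
    intro S hS
    obtain ⟨k, hk, habs⟩ := hFprop S hS
    simp only [hFp, hFm, mem_union, mem_filter]
    rcases le_abs.1 habs with hpos | hneg
    · exact Or.inl ⟨hS, k, hk, Real.exp_le_exp.2 (mul_le_mul_of_nonneg_left hpos hlam0)⟩
    · refine Or.inr ⟨hS, k, hk, ?_⟩
      rw [ha]
      apply Real.exp_le_exp.2
      have : lam * t ≤ lam * (-(Xv n Z S k)) := mul_le_mul_of_nonneg_left hneg hlam0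
      linarith
  have hcards : F.card ≤ Fp.card + Fm.card :=
    le_trans (card_le_card hFunion) (card_union_le _ _)
  have hFpprop : ∀ S ∈ Fp, ∃ k ∈ Icc 1 n, a ≤ Real.exp (lam * Xv n Z S k) := by
    intro S hS
    simp only [hFp, mem_filter] at hS
    exact hS.2
  have hFmprop : ∀ S ∈ Fm, ∃ k ∈ Icc 1 n, a ≤ Real.exp ((-lam) * Xv n Z S k) := by
    intro S hS
    simp only [hFm, mem_filter] at hS
    exact hS.2
  have hFpsub : Fp ⊆ Om n Z := fun S hS => hFsub (by
    simp only [hFp, mem_filter] at hS; exact hS.1)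
  have hFmsub : Fm ⊆ Om n Z := fun S hS => hFsub (by
    simp only [hFm, mem_filter] at hS; exact hS.1)
  have h1 := maximal hn lam a hapos hFpsub hFpprop
  have h2 := maximal hn (-lam) a hapos hFmsub hFmprop
  rw [neg_pow] at h2
  have h2' : a * (Fm.card : ℝ) ≤ Real.exp (lam^2 * (n:ℝ)⁻¹ / 2) * ((Om n Z).card : ℝ) := by
    calc a * (Fm.card : ℝ) ≤ Real.exp ((-1)^2 * lam^2 * (n:ℝ)⁻¹ / 2) * ((Om n Z).card : ℝ) := h2
      _ = Real.exp (lam^2 * (n:ℝ)⁻¹ / 2) * ((Om n Z).card : ℝ) := by norm_num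
  set E : ℝ := Real.exp (lam^2 * (n:ℝ)⁻¹ / 2) with hE
  have hsum : a * (F.card : ℝ) ≤ 2 * E * ((Om n Z).card : ℝ) := by
    have hc : (F.card : ℝ) ≤ (Fp.card : ℝ) + (Fm.card : ℝ) := by
      exact_mod_cast hcards
    calc a * (F.card : ℝ) ≤ a * ((Fp.card : ℝ) + (Fm.card : ℝ)) :=
          mul_le_mul_of_nonneg_left hc hapos.le
      _ = a * (Fp.card : ℝ) + a * (Fm.card : ℝ) := by ring
      _ ≤ E * ((Om n Z).card : ℝ) + E * ((Om n Z).card : ℝ) := add_le_add h1 h2'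
      _ = 2 * E * ((Om n Z).card : ℝ) := by ring
  have hEa : E / a = Real.exp (-(t^2) * (n:ℝ) / 2) := by
    rw [hE, ha, ← Real.exp_sub]
    congr 1
    have hnne : (n:ℝ) ≠ 0 := by
      have : (1:ℝ) ≤ (n:ℝ) := by exact_mod_cast hn
      linarith
    rw [hlam]
    field_simp
    ring
  calc (F.card : ℝ) = (a * (F.card : ℝ)) / a := by field_simp
    _ ≤ (2 * E * ((Om n Z).card : ℝ)) / a := by gcongr
    _ = 2 * (E / a) * ((Om n Z).card : ℝ) := by ring
    _ = 2 * Real.exp (-(t^2) * (n:ℝ) / 2) * ((Om n Z).card : ℝ) := by rw [hEa]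


lemma exists_perm_map {N : ℕ} {S B : Finset (Fin N)} (h : S.card = B.card) :
    ∃ g : Equiv.Perm (Fin N), ∀ j, j ∈ S ↔ g j ∈ B := by
  have hcompl : Sᶜ.card = Bᶜ.card := by rw [card_compl, card_compl, h]
  let e1 : {x // x ∈ S} ≃ {x // x ∈ B} := equivOfCardEq h
  let e2' : {x // ¬ x ∈ S} ≃ {x // ¬ x ∈ B} :=
    ((Equiv.subtypeEquivRight (fun x => (Finset.mem_compl (s := S)).symm)).trans
      (equivOfCardEq hcompl)).trans (Equiv.subtypeEquivRight (fun x => Finset.mem_compl))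
  refine ⟨(Equiv.sumCompl (· ∈ S)).symm.trans ((e1.sumCongr e2').trans
    (Equiv.sumCompl (· ∈ B))), fun j => ?_⟩
  by_cases hj : j ∈ S
  · simp only [Equiv.trans_apply, Equiv.sumCompl_symm_apply_of_pos hj, Equiv.sumCongr_apply,
      Sum.map_inl, Equiv.sumCompl_apply_inl]
    exact ⟨fun _ => (e1 ⟨j, hj⟩).2, fun _ => hj⟩
  · simp only [Equiv.trans_apply, Equiv.sumCompl_symm_apply_of_neg hj, Equiv.sumCongr_apply,
      Sum.map_inr, Equiv.sumCompl_apply_inr]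
    exact ⟨fun h' => absurd h' hj, fun h' => absurd h' (e2' ⟨j, hj⟩).2⟩

lemma perm_bound {n : ℕ} (hn : 1 ≤ n) (b : Fin (2*n) → Fin 2) (t : ℝ) (ht : 0 ≤ t)
    (FP : Finset (Equiv.Perm (Fin (2*n))))
    (hFP : ∀ σ : Equiv.Perm (Fin (2*n)), σ ∈ FP ↔
      ∃ i ∈ Icc 1 n, t ≤ |Xv n ((univ.filter (fun j => b j = 0)).card)
        (univ.filter (fun j => b (σ j) = 0)) i|) :
    (FP.card : ℝ) / ((univ : Finset (Equiv.Perm (Fin (2*n)))).card : ℝ)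
      ≤ 2 * Real.exp (-(t^2) * (n:ℝ) / 2) := by
  classical
  set B : Finset (Fin (2*n)) := univ.filter (fun j => b j = 0) with hB
  set Z := B.card with hZ
  set f : Equiv.Perm (Fin (2*n)) → Finset (Fin (2*n)) :=
    fun σ => univ.filter (fun j => b (σ j) = 0) with hf
  have hfcard : ∀ σ, (f σ).card = Z := by
    intro σ
    rw [hZ, hf, hB]
    apply card_nbij (fun j => σ j)
    · intro a ha
      simp only [mem_coe, mem_filter, mem_univ, true_and] at ha ⊢
      exact ha
    · intro x _ y _ hxy
      exact σ.injective hxy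
    · intro x hx
      simp only [coe_filter, Set.mem_setOf_eq, mem_coe, mem_univ, true_and, Set.mem_image] at hx ⊢
      exact ⟨σ.symm x, by simpa using hx, by simp⟩
  have hfOm : ∀ σ, f σ ∈ Om n Z := fun σ => mem_Om.2 (hfcard σ)
  -- all fibers have the same cardinality
  set K := (univ.filter (fun σ : Equiv.Perm (Fin (2*n)) => f σ = B)).card with hK
  have hchar : ∀ (σ : Equiv.Perm (Fin (2*n))) (W : Finset (Fin (2*n))),
      f σ = W ↔ ∀ j, (b (σ j) = 0 ↔ j ∈ W) := by
    intro σ W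
    constructor
    · intro hW j
      rw [← hW, hf]
      simp
    · intro hW
      rw [hf]
      ext j
      simp [hW j]
  have hfib : ∀ S ∈ Om n Z, (univ.filter (fun σ => f σ = S)).card = K := by
    intro S hS
    obtain ⟨g, hg⟩ := exists_perm_map (show S.card = B.card from mem_Om.1 hS)
    rw [hK]
    have hinv1 : ∀ σ : Equiv.Perm (Fin (2*n)), g.trans (g.symm.trans σ) = σ := by
      intro σ; ext x; simp
    have hinv2 : ∀ σ : Equiv.Perm (Fin (2*n)), g.symm.trans (g.trans σ) = σ := by
      intro σ; ext x; simp
    apply card_bij' (fun σ _ => g.symm.trans σ) (fun τ _ => g.trans τ)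
      ?_ ?_ (fun σ _ => hinv1 σ) (fun τ _ => hinv2 τ)
    · intro σ hσ
      simp only [mem_filter, mem_univ, true_and] at hσ ⊢
      rw [hchar]
      intro j
      have h1 := (hchar σ S).1 hσ (g.symm j)
      rw [Equiv.trans_apply]
      rw [h1, hg (g.symm j), Equiv.apply_symm_apply]
    · intro τ hτ
      simp only [mem_filter, mem_univ, true_and] at hτ ⊢
      rw [hchar]
      intro j
      have h1 := (hchar τ B).1 hτ (g j)
      rw [Equiv.trans_apply]
      rw [h1, ← hg j]
  -- event on subsets
  set Q : Finset (Fin (2*n)) → Prop := fun S => ∃ k ∈ Icc 1 n, t ≤ |Xv n Z S k| with hQ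
  have hPQ : ∀ σ, σ ∈ FP ↔ Q (f σ) := by
    intro σ
    rw [hFP σ, hQ]
  -- fiberwise counting
  have hcount1 : FP.card = ∑ S ∈ Om n Z, (FP.filter (fun σ => f σ = S)).card :=
    card_eq_sum_card_fiberwise (fun σ _ => hfOm σ)
  have hcount2 : ((univ : Finset (Equiv.Perm (Fin (2*n)))).card)
      = ∑ S ∈ Om n Z, (univ.filter (fun σ => f σ = S)).card :=
    card_eq_sum_card_fiberwise (fun σ _ => hfOm σ)
  have hterm : ∀ S ∈ Om n Z,
      (FP.filter (fun σ => f σ = S)).card = if Q S then K else 0 := by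
    intro S hS
    by_cases hQS : Q S
    · rw [if_pos hQS, ← hfib S hS]
      congr 1
      ext σ
      simp only [mem_filter, mem_univ, true_and]
      constructor
      · rintro ⟨_, h2⟩; exact h2
      · intro h2
        exact ⟨(hPQ σ).2 (by rw [h2]; exact hQS), h2⟩
    · rw [if_neg hQS, card_eq_zero]
      ext σ
      simp only [mem_filter, notMem_empty, iff_false, not_and]
      intro h1 h2
      exact hQS (by rw [← h2]; exact (hPQ σ).1 h1)
  have hcount1' : FP.card = ((Om n Z).filter Q).card * K := by
    rw [hcount1, sum_congr rfl hterm, ← sum_filter, sum_const, smul_eq_mul]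
  have hcount2' : ((univ : Finset (Equiv.Perm (Fin (2*n)))).card) = (Om n Z).card * K := by
    rw [hcount2, sum_congr rfl hfib, sum_const, smul_eq_mul]
  -- the probability bound on subsets
  have hQsub : (Om n Z).filter Q ⊆ Om n Z := filter_subset _ _
  have hQprop : ∀ S ∈ (Om n Z).filter Q, ∃ k ∈ Icc 1 n, t ≤ |Xv n Z S k| := by
    intro S hS
    have := (mem_filter.1 hS).2
    rwa [hQ] at this
  have hbound := main_subset hn t ht hQsub hQprop
  -- positivity
  have hK1 : 0 < K := by
    rw [hK]
    apply card_pos.2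
    refine ⟨Equiv.refl _, ?_⟩
    simp only [mem_filter, mem_univ, true_and]
    rw [hchar]
    intro j
    rw [hB]
    simp
  have hOm1 : 0 < (Om n Z).card := card_pos.2 ⟨B, mem_Om.2 rfl⟩
  -- final arithmetic
  rw [hcount1', hcount2']
  have hKR : (0:ℝ) < (K : ℝ) := by exact_mod_cast hK1
  have hOmR : (0:ℝ) < ((Om n Z).card : ℝ) := by exact_mod_cast hOm1
  rw [Nat.cast_mul, Nat.cast_mul, div_le_iff₀ (mul_pos hOmR hKR)]
  calc (((Om n Z).filter Q).card : ℝ) * (K : ℝ)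
      ≤ (2 * Real.exp (-(t^2) * (n:ℝ) / 2) * ((Om n Z).card : ℝ)) * (K : ℝ) :=
        mul_le_mul_of_nonneg_right hbound hKR.le
    _ = 2 * Real.exp (-(t^2) * (n:ℝ) / 2) * (((Om n Z).card : ℝ) * (K : ℝ)) := by ring


lemma fcard {n : ℕ} (b : Fin (2*n) → Fin 2) (σ : Equiv.Perm (Fin (2*n))) :
    ((univ : Finset (Fin (2*n))).filter (fun j => b (σ j) = 0)).card
      = ((univ : Finset (Fin (2*n))).filter (fun j => b j = 0)).card := by
  apply card_nbij (fun j => σ j)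
  · intro a ha
    simp only [mem_coe, mem_filter, mem_univ, true_and] at ha ⊢
    exact ha
  · intro x _ y _ hxy
    exact σ.injective hxy
  · intro x hx
    simp only [coe_filter, Set.mem_setOf_eq, mem_coe, mem_univ, true_and, Set.mem_image] at hx ⊢
    exact ⟨σ.symm x, by simpa using hx, by simp⟩

end
end Stmt0Aux

open scoped Classical in
/-- maximal deviation of the running zero-fraction under a uniformly
random permutation. -/
theorem stmt_0 (n : ℕ) (hn : 1 ≤ n) (b : Fin (2 * n) → Fin 2) (t : ℝ) (ht : 0 ≤ t) :
    let Y : Equiv.Perm (Fin (2 * n)) → ℕ → ℕ := fun σ i =>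
      (Finset.univ.filter (fun j : Fin (2 * n) => i ≤ (j : ℕ) ∧ b (σ j) = 0)).card
    let X : Equiv.Perm (Fin (2 * n)) → ℕ → ℝ := fun σ i =>
      (Y σ i : ℝ) / (2 * (n : ℝ) - i) - (Y σ 0 : ℝ) / (2 * (n : ℝ))
    ((Finset.univ.filter (fun σ : Equiv.Perm (Fin (2 * n)) =>
        ∃ i ∈ Finset.Icc 1 n, t ≤ |X σ i|)).card : ℝ) /
      ((Finset.univ : Finset (Equiv.Perm (Fin (2 * n)))).card : ℝ)
      ≤ 2 * Real.exp (-(t ^ 2) * n / 2) := by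
  intro Y X
  have hY : ∀ (σ : Equiv.Perm (Fin (2*n))) (i : ℕ),
      Y σ i = Stmt0Aux.yv n (univ.filter (fun j => b (σ j) = 0)) i := by
    intro σ i
    simp only [Y, Stmt0Aux.yv, filter_filter]
    exact congrArg card (filter_congr fun j _ => and_comm)
  have hX : ∀ (σ : Equiv.Perm (Fin (2*n))) (i : ℕ),
      X σ i = Stmt0Aux.Xv n ((univ.filter (fun j => b j = 0)).card)
        (univ.filter (fun j => b (σ j) = 0)) i := by
    intro σ i
    simp only [X, Stmt0Aux.Xv]
    rw [hY σ i, hY σ 0, Stmt0Aux.yv_zero, Stmt0Aux.fcard b σ]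
  apply Stmt0Aux.perm_bound hn b t ht
  intro σ
  simp only [mem_filter, mem_univ, true_and]
  constructor
  · rintro ⟨i, hi, hti⟩
    exact ⟨i, hi, by rwa [hX σ i] at hti⟩
  · rintro ⟨i, hi, hti⟩
    exact ⟨i, hi, by rwa [hX σ i]⟩
end

section
/- Let B ≥ 2, let D be a multiset of n elements of {1,…,B}, let τ ∈ (0,1) with τn and (1−τ)n integers, and let α ∈ (0,1/2). Let D_P be the multiset obtained from D by adding (1−τ)n copies of the value 1 and τn copies of the value B. Suppose m_P ∈ {1,…,B} satisfies F_{D_P}(m_P) < 1/2 + α and F_{D_P}(m_P + 1) > 1/2 − α (an α-approximate median of D_P). Then m_P ≠ B, and F_D(m_P) < τ + 2α and F_D(m_P + 1) > τ − 2α; that is, m_P is a 2α-approximate τ-quantile of D. -/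
open Finset

/-- an `α`-approximate median of the padded dataset `D_P` is a
`2α`-approximate `τ`-quantile of `D`, and it is never equal to `B`. -/
theorem stmt_5 (B n : ℕ) (hB : 2 ≤ B) (hn : 0 < n) (D : Multiset ℕ)
    (hD : ∀ x ∈ D, x ∈ Finset.Icc 1 B) (hcard : Multiset.card D = n)
    (τ α : ℝ) (hτ : τ ∈ Set.Ioo (0 : ℝ) 1) (hα : α ∈ Set.Ioo (0 : ℝ) (1 / 2))
    (a k : ℕ) (ha : (a : ℝ) = (1 - τ) * n) (hk : (k : ℝ) = τ * n)
    (mP : ℕ) (hmP : mP ∈ Finset.Icc 1 B) :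
    let F : Multiset ℕ → ℕ → ℝ := fun S y =>
      ((S.filter (fun z => z ≤ y)).card : ℝ) / (S.card : ℝ)
    let DP : Multiset ℕ := D + Multiset.replicate a 1 + Multiset.replicate k B
    F DP mP < 1 / 2 + α → F DP (mP + 1) > 1 / 2 - α →
      mP ≠ B ∧ F D mP < τ + 2 * α ∧ F D (mP + 1) > τ - 2 * α := by
  intro F DP h1 h2
  obtain ⟨hτ0, hτ1⟩ := hτ
  obtain ⟨hα0, hα2⟩ := hα
  obtain ⟨hmP1, hmPB⟩ := Finset.mem_Icc.mp hmP
  have hn' : (0:ℝ) < n := by exact_mod_cast hn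
  have hak : (a:ℝ) + k = n := by rw [ha, hk]; ring
  have hDB : ∀ y, B ≤ y → D.filter (fun z => z ≤ y) = D := by
    intro y hy
    exact Multiset.filter_eq_self.mpr
      (fun x hx => le_trans (Finset.mem_Icc.mp (hD x hx)).2 hy)
  have hDPcard : (Multiset.card DP : ℝ) = 2 * n := by
    simp only [DP, Multiset.card_add, Multiset.card_replicate, hcard]
    push_cast
    linarith
  have hfilt : ∀ y, 1 ≤ y →
      ((DP.filter (fun z => z ≤ y)).card : ℝ)
        = ((D.filter (fun z => z ≤ y)).card : ℝ) + a + (if B ≤ y then (k:ℝ) else 0) := by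
    intro y hy
    have h1r : Multiset.filter (fun z => z ≤ y) (Multiset.replicate a 1) = Multiset.replicate a 1 :=
      Multiset.filter_eq_self.mpr (fun x hx => by rw [Multiset.eq_of_mem_replicate hx]; exact hy)
    have h2r : Multiset.filter (fun z => z ≤ y) (Multiset.replicate k B)
        = if B ≤ y then Multiset.replicate k B else 0 := by
      by_cases hBy : B ≤ y
      · rw [if_pos hBy]
        exact Multiset.filter_eq_self.mpr
          (fun x hx => by rw [Multiset.eq_of_mem_replicate hx]; exact hBy)
      · rw [if_neg hBy]
        exact Multiset.filter_eq_nil.mpr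
          (fun x hx => by rw [Multiset.eq_of_mem_replicate hx]; exact hBy)
    simp only [DP, Multiset.filter_add, Multiset.card_add, h1r, h2r]
    by_cases hBy : B ≤ y
    · rw [if_pos hBy, if_pos hBy]
      simp
    · rw [if_neg hBy, if_neg hBy]
      simp
  -- mP ≠ B
  have hmPne : mP ≠ B := by
    intro hEq
    have hf := hfilt mP hmP1
    rw [if_pos (hEq ▸ le_refl B), hDB mP (hEq ▸ le_refl B), hcard] at hf
    have h1' : ((DP.filter (fun z => z ≤ mP)).card : ℝ) < (1/2 + α) * (2 * n) := by
      have := h1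
      simp only [F] at this
      rw [hDPcard] at this
      exact (div_lt_iff₀ (by linarith)).mp this
    rw [hf] at h1'
    nlinarith
  have hmPltB : mP < B := lt_of_le_of_ne hmPB hmPne
  have hcount_le : ∀ y, ((D.filter (fun z => z ≤ y)).card : ℝ) ≤ n := by
    intro y
    have := Multiset.card_le_card (Multiset.filter_le (fun z => z ≤ y) D)
    rw [hcard] at this
    exact_mod_cast this
  -- second part
  have hpart2 : F D mP < τ + 2 * α := by
    have hf := hfilt mP hmP1
    rw [if_neg (by omega : ¬ B ≤ mP)] at hf
    have h1' : ((DP.filter (fun z => z ≤ mP)).card : ℝ) < (1/2 + α) * (2 * n) := by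
      have := h1
      simp only [F] at this
      rw [hDPcard] at this
      exact (div_lt_iff₀ (by linarith)).mp this
    rw [hf] at h1'
    simp only [F]
    rw [hcard]
    rw [div_lt_iff₀ hn']
    have : (a:ℝ) = (1 - τ) * n := ha
    nlinarith
  -- third part
  refine ⟨hmPne, hpart2, ?_⟩
  by_cases hB1 : B ≤ mP + 1
  · -- mP + 1 = B, so all of D counted
    simp only [F]
    rw [hDB (mP+1) hB1, hcard, div_self (ne_of_gt hn')]
    nlinarith
  · have hf := hfilt (mP+1) (by omega)
    rw [if_neg hB1] at hf
    have h2' : ((DP.filter (fun z => z ≤ mP + 1)).card : ℝ) > (1/2 - α) * (2 * n) := by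
      have := h2
      simp only [F] at this
      rw [hDPcard] at this
      exact (lt_div_iff₀ (by linarith)).mp this
    rw [hf] at h2'
    simp only [F]
    rw [hcard]
    rw [gt_iff_lt, lt_div_iff₀ hn']
    nlinarith
end
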